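/- arXiv:2209.10002 — 4 statements merged into one kernel-verified Lean document; each statement's English description precedes it below -/
import Mathlib

section
/- For every square matrix A over the complex numbers, there exist symmetric matrices S and V (i.e., S = Sᵀ and V = Vᵀ) with S invertible such that A = S · V. -/
open Polynomial

noncomputable section FrobAux

namespace FrobAux

/-- Top-coefficient functional: coefficient of `X^(deg q - 1)` of `f mod q`. -/
def ell (q f : ℂ[X]) : ℂ := (f %ₘ q).coeff (q.natDegree - 1)

lemma ell_add (q f g : ℂ[X]) : ell q (f + g) = ell q f + ell q g := by
  simp [ell, Polynomial.add_modByMonic, coeff_add]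

lemma ell_zero (q : ℂ[X]) : ell q 0 = 0 := by simp [ell]

lemma ell_C_mul (q : ℂ[X]) (c : ℂ) (f : ℂ[X]) : ell q (C c * f) = c * ell q f := by
  rw [← smul_eq_C_mul]
  simp [ell, Polynomial.smul_modByMonic, coeff_smul, smul_eq_mul]

/-- The pairing on the cyclic module `ℂ[X] ⧸ J`. -/
def bq (q : ℂ[X]) (J : Submodule ℂ[X] ℂ[X]) (u v : ℂ[X] ⧸ J) : ℂ :=
  ell q (Quotient.out u * Quotient.out v)

lemma bq_symm (q : ℂ[X]) (J : Submodule ℂ[X] ℂ[X]) (u v : ℂ[X] ⧸ J) :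
    bq q J u v = bq q J v u := by
  unfold bq; rw [mul_comm]

section

variable {q : ℂ[X]} {J : Submodule ℂ[X] ℂ[X]}
variable (hq : q.Monic) (hJ : ∀ f, f ∈ J ↔ q ∣ f)
include hq hJ

lemma modeq {f f' : ℂ[X]}
    (h : (Submodule.Quotient.mk f : ℂ[X] ⧸ J) = Submodule.Quotient.mk f') :
    f %ₘ q = f' %ₘ q := by
  have hd : q ∣ f - f' := (hJ _).mp ((Submodule.Quotient.eq J).mp h)
  have h0 : (f - f') %ₘ q = 0 := (Polynomial.modByMonic_eq_zero_iff_dvd hq).mpr hd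
  rw [Polynomial.sub_modByMonic] at h0
  exact sub_eq_zero.mp h0

lemma ell_eq {f f' : ℂ[X]}
    (h : (Submodule.Quotient.mk f : ℂ[X] ⧸ J) = Submodule.Quotient.mk f') (g : ℂ[X]) :
    ell q (f * g) = ell q (f' * g) := by
  have hmk : (Submodule.Quotient.mk (f * g) : ℂ[X] ⧸ J) = Submodule.Quotient.mk (f' * g) := by
    rw [Submodule.Quotient.eq] at h ⊢
    have heq : f * g - f' * g = (f - f') * g := by ring
    rw [heq]
    exact (hJ _).mpr (((hJ _).mp h).mul_right g)
  unfold ell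
  rw [modeq hq hJ hmk]

omit hq hJ in
lemma mk_out (u : ℂ[X] ⧸ J) :
    (Submodule.Quotient.mk (Quotient.out u) : ℂ[X] ⧸ J) = u := by
  rw [← Submodule.Quotient.mk''_eq_mk]
  exact Quotient.out_eq' u

lemma bq_mk (f g : ℂ[X]) :
    bq q J (Submodule.Quotient.mk f) (Submodule.Quotient.mk g) = ell q (f * g) := by
  unfold bq
  calc ell q (Quotient.out (Submodule.Quotient.mk f : ℂ[X] ⧸ J) *
        Quotient.out (Submodule.Quotient.mk g : ℂ[X] ⧸ J))
      = ell q (f * Quotient.out (Submodule.Quotient.mk g : ℂ[X] ⧸ J)) :=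
        ell_eq hq hJ (mk_out _) _
    _ = ell q (Quotient.out (Submodule.Quotient.mk g : ℂ[X] ⧸ J) * f) := by rw [mul_comm]
    _ = ell q (g * f) := ell_eq hq hJ (mk_out _) _
    _ = ell q (f * g) := by rw [mul_comm]

lemma bq_smul (p : ℂ[X]) (u v : ℂ[X] ⧸ J) :
    bq q J (p • u) v = bq q J u (p • v) := by
  obtain ⟨f, rfl⟩ := Submodule.Quotient.mk_surjective J u
  obtain ⟨g, rfl⟩ := Submodule.Quotient.mk_surjective J v
  rw [← Submodule.Quotient.mk_smul, ← Submodule.Quotient.mk_smul, bq_mk hq hJ, bq_mk hq hJ,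
    smul_eq_mul, smul_eq_mul]
  congr 1
  ring

lemma bq_addL (u u' v : ℂ[X] ⧸ J) :
    bq q J (u + u') v = bq q J u v + bq q J u' v := by
  obtain ⟨f, rfl⟩ := Submodule.Quotient.mk_surjective J u
  obtain ⟨f', rfl⟩ := Submodule.Quotient.mk_surjective J u'
  obtain ⟨g, rfl⟩ := Submodule.Quotient.mk_surjective J v
  rw [← Submodule.Quotient.mk_add, bq_mk hq hJ, bq_mk hq hJ, bq_mk hq hJ, add_mul, ell_add]

lemma bq_CsmulL (c : ℂ) (u v : ℂ[X] ⧸ J) :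
    bq q J ((C c : ℂ[X]) • u) v = c * bq q J u v := by
  obtain ⟨f, rfl⟩ := Submodule.Quotient.mk_surjective J u
  obtain ⟨g, rfl⟩ := Submodule.Quotient.mk_surjective J v
  rw [← Submodule.Quotient.mk_smul, bq_mk hq hJ, bq_mk hq hJ, smul_eq_mul, mul_assoc, ell_C_mul]

lemma bq_zeroR (u : ℂ[X] ⧸ J) : bq q J u 0 = 0 := by
  obtain ⟨f, rfl⟩ := Submodule.Quotient.mk_surjective J u
  rw [show (0 : ℂ[X] ⧸ J) = Submodule.Quotient.mk 0 from (Submodule.Quotient.mk_zero J).symm,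
    bq_mk hq hJ, mul_zero, ell_zero]

lemma bq_nondeg (u : ℂ[X] ⧸ J) (h : ∀ v, bq q J u v = 0) : u = 0 := by
  obtain ⟨f, rfl⟩ := Submodule.Quotient.mk_surjective J u
  set r : ℂ[X] := f %ₘ q with hr_def
  have hmkr : (Submodule.Quotient.mk r : ℂ[X] ⧸ J) = Submodule.Quotient.mk f := by
    rw [Submodule.Quotient.eq]
    refine (hJ _).mpr ⟨-(f /ₘ q), ?_⟩
    have := Polynomial.modByMonic_add_div f q
    rw [← hr_def] at this
    linear_combination this - f
  by_cases hr : r = 0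
  · rw [← hmkr, hr, Submodule.Quotient.mk_zero]
  · exfalso
    have hdeg : r.natDegree < q.natDegree :=
      Polynomial.natDegree_lt_natDegree hr (Polynomial.degree_modByMonic_lt f hq)
    set k : ℕ := q.natDegree - 1 - r.natDegree with hk
    have hsum : r.natDegree + k = q.natDegree - 1 := by omega
    have h0 := h (Submodule.Quotient.mk (X ^ k))
    rw [show (Submodule.Quotient.mk f : ℂ[X] ⧸ J) = Submodule.Quotient.mk r from hmkr.symm,
      bq_mk hq hJ] at h0
    have hrX : r * X ^ k ≠ 0 := mul_ne_zero hr (pow_ne_zero _ Polynomial.X_ne_zero)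
    have hnd : (r * X ^ k).natDegree = q.natDegree - 1 := by
      rw [Polynomial.natDegree_mul hr (pow_ne_zero _ Polynomial.X_ne_zero),
        Polynomial.natDegree_X_pow]
      exact hsum
    have hdlt : (r * X ^ k).degree < q.degree := by
      rw [Polynomial.degree_eq_natDegree hrX, Polynomial.degree_eq_natDegree hq.ne_zero, hnd]
      exact_mod_cast (by omega : q.natDegree - 1 < q.natDegree)
    have hself : (r * X ^ k) %ₘ q = r * X ^ k :=
      (Polynomial.modByMonic_eq_self_iff hq).mpr hdlt
    have : ell q (r * X ^ k) = r.leadingCoeff := by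
      rw [ell, hself, ← hsum, Polynomial.coeff_mul_X_pow]
      rfl
    rw [h0] at this
    exact Polynomial.leadingCoeff_ne_zero.mpr hr this.symm

end

/-- There is a nondegenerate symmetric pairing on `Fin n → ℂ` for which `A` is self-adjoint. -/
theorem exists_good_pairing (n : ℕ) (A : Matrix (Fin n) (Fin n) ℂ) :
    ∃ β : (Fin n → ℂ) → (Fin n → ℂ) → ℂ,
      (∀ x y, β x y = β y x) ∧
      (∀ x y, β (A.mulVec x) y = β x (A.mulVec y)) ∧
      (∀ x x' y, β (x + x') y = β x y + β x' y) ∧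
      (∀ (c : ℂ) x y, β (c • x) y = c * β x y) ∧
      (∀ x, (∀ y, β x y = 0) → x = 0) := by
  classical
  set φ : (Fin n → ℂ) →ₗ[ℂ] (Fin n → ℂ) := (Matrix.toLinAlgEquiv' A : _) with hφ
  have tors : Module.IsTorsion ℂ[X] (Module.AEval' φ) := by
    intro x
    refine ⟨⟨A.charpoly, mem_nonZeroDivisors_of_ne_zero A.charpoly_monic.ne_zero⟩, ?_⟩
    show A.charpoly • x = 0
    have haev : aeval φ A.charpoly = 0 := by
      rw [hφ, Polynomial.aeval_algHom_apply (Matrix.toLinAlgEquiv' (R := ℂ) (n := Fin n)) A,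
        Matrix.aeval_self_charpoly, map_zero]
    apply (Module.AEval'.of φ).symm.injective
    rw [Module.AEval.of_symm_smul, haev, zero_smul, map_zero]
  obtain ⟨ι, hι, p, hp, e, ⟨E⟩⟩ := Module.equiv_directSum_of_isTorsion tors
  have hqr : ∀ i, p i ^ e i ≠ 0 := fun i => pow_ne_zero _ (hp i).ne_zero
  set qm : ι → ℂ[X] := fun i => p i ^ e i * C (p i ^ e i).leadingCoeff⁻¹ with hqm_def
  have hqm : ∀ i, (qm i).Monic := fun i => Polynomial.monic_mul_leadingCoeff_inv (hqr i)
  have hJ : ∀ i (f : ℂ[X]), f ∈ (ℂ[X] ∙ (p i ^ e i)) ↔ qm i ∣ f := by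
    intro i f
    rw [Ideal.submodule_span_eq, Ideal.mem_span_singleton]
    exact (associated_mul_unit_right (p i ^ e i) _
      (isUnit_C.mpr (Ne.isUnit (inv_ne_zero
        (Polynomial.leadingCoeff_ne_zero.mpr (hqr i)))))).dvd_iff_dvd_left
  set ψ : (Fin n → ℂ) → (DirectSum ι (fun i => ℂ[X] ⧸ (ℂ[X] ∙ (p i ^ e i)))) :=
    fun x => E (Module.AEval'.of φ x) with hψ
  have hφ_apply : ∀ z, φ z = A.mulVec z := fun z => Matrix.toLinAlgEquiv'_apply A z
  have hψ_surj : Function.Surjective ψ := by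
    intro v
    refine ⟨(Module.AEval'.of φ).symm (E.symm v), ?_⟩
    show E (Module.AEval'.of φ ((Module.AEval'.of φ).symm (E.symm v))) = v
    rw [LinearEquiv.apply_symm_apply, LinearEquiv.apply_symm_apply]
  have hψX : ∀ z, ψ (A.mulVec z) = (X : ℂ[X]) • ψ z := by
    intro z
    show E (Module.AEval'.of φ (A.mulVec z)) = (X : ℂ[X]) • E (Module.AEval'.of φ z)
    rw [← map_smul, Module.AEval'.X_smul_of]
    exact congrArg E (congrArg (Module.AEval'.of φ) (hφ_apply z).symm)
  have hψadd : ∀ x x', ψ (x + x') = ψ x + ψ x' := by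
    intro x x'
    show E (Module.AEval'.of φ (x + x')) = E (Module.AEval'.of φ x) + E (Module.AEval'.of φ x')
    rw [map_add, map_add]
  have hψsmul : ∀ (c : ℂ) x, ψ (c • x) = (C c : ℂ[X]) • ψ x := by
    intro c x
    show E (Module.AEval'.of φ (c • x)) = (C c : ℂ[X]) • E (Module.AEval'.of φ x)
    rw [show (Module.AEval'.of φ) (c • x) = (C c : ℂ[X]) • (Module.AEval'.of φ) x by
      rw [map_smul, Module.AEval.C_smul], map_smul]
  refine ⟨fun x y => ∑ i, bq (qm i) (ℂ[X] ∙ (p i ^ e i)) (ψ x i) (ψ y i), ?_, ?_, ?_, ?_, ?_⟩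
  · intro x y
    exact Finset.sum_congr rfl fun i _ => bq_symm _ _ _ _
  · intro x y
    show (∑ i, bq (qm i) (ℂ[X] ∙ (p i ^ e i)) (ψ (A.mulVec x) i) (ψ y i)) =
      ∑ i, bq (qm i) (ℂ[X] ∙ (p i ^ e i)) (ψ x i) (ψ (A.mulVec y) i)
    rw [hψX, hψX]
    refine Finset.sum_congr rfl fun i _ => ?_
    rw [DirectSum.smul_apply, DirectSum.smul_apply, bq_smul (hqm i) (hJ i)]
  · intro x x' y
    show (∑ i, bq (qm i) (ℂ[X] ∙ (p i ^ e i)) (ψ (x + x') i) (ψ y i)) =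
      (∑ i, bq (qm i) (ℂ[X] ∙ (p i ^ e i)) (ψ x i) (ψ y i)) +
      ∑ i, bq (qm i) (ℂ[X] ∙ (p i ^ e i)) (ψ x' i) (ψ y i)
    rw [hψadd, ← Finset.sum_add_distrib]
    refine Finset.sum_congr rfl fun i _ => ?_
    rw [DirectSum.add_apply, bq_addL (hqm i) (hJ i)]
  · intro c x y
    show (∑ i, bq (qm i) (ℂ[X] ∙ (p i ^ e i)) (ψ (c • x) i) (ψ y i)) =
      c * ∑ i, bq (qm i) (ℂ[X] ∙ (p i ^ e i)) (ψ x i) (ψ y i)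
    rw [hψsmul, Finset.mul_sum]
    refine Finset.sum_congr rfl fun i _ => ?_
    rw [DirectSum.smul_apply, bq_CsmulL (hqm i) (hJ i)]
  · intro x hx
    have hx' : ∀ y, (∑ i, bq (qm i) (ℂ[X] ∙ (p i ^ e i)) (ψ x i) (ψ y i)) = 0 := hx
    have hψ0 : ψ x = 0 := by
      refine DFinsupp.ext fun i => ?_
      refine bq_nondeg (hqm i) (hJ i) _ fun g => ?_
      obtain ⟨y, hy⟩ := hψ_surj (DirectSum.of _ i g)
      have h0 := hx' y
      rw [hy] at h0
      rw [Finset.sum_eq_single i (fun j _ hj => by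
        rw [DirectSum.of_eq_of_ne _ _ _ hj, bq_zeroR (hqm j) (hJ j)])
        (fun h => absurd (Finset.mem_univ i) h)] at h0
      rwa [DirectSum.of_eq_same] at h0
    have h00 : Module.AEval'.of φ x = 0 := by
      apply E.injective
      rw [map_zero]
      exact hψ0
    simpa using congrArg (Module.AEval'.of φ).symm h00

end FrobAux

end FrobAux

open Matrix in
theorem frobenius_symmetric_factorization (n : ℕ) (A : Matrix (Fin n) (Fin n) ℂ) :
    ∃ S V : Matrix (Fin n) (Fin n) ℂ,
      S.IsSymm ∧ V.IsSymm ∧ IsUnit S ∧ A = S * V := by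
  classical
  obtain ⟨β, hsymm, hadj, haddL, hsmulL, hnd⟩ := FrobAux.exists_good_pairing n A
  have h0L : ∀ x, β 0 x = 0 := by
    intro x
    have h := haddL 0 0 x
    rw [add_zero] at h
    exact (left_eq_add.mp h)
  have hsumL : ∀ (v y : Fin n → ℂ), β y v = ∑ i, y i * β (Pi.single i 1) v := by
    intro v y
    have key : ∀ s : Finset (Fin n),
        β (∑ i ∈ s, Pi.single i (y i)) v = ∑ i ∈ s, y i * β (Pi.single i 1) v := by
      intro s
      induction s using Finset.induction_on with
      | empty => simpa using h0L v
      | @insert a s hni ih =>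
        rw [Finset.sum_insert hni, Finset.sum_insert hni, haddL, ih]
        congr 1
        have hsingle : (Pi.single a (y a) : Fin n → ℂ) = y a • (Pi.single a 1 : Fin n → ℂ) := by
          rw [← Pi.single_smul, smul_eq_mul, mul_one]
        rw [hsingle, hsmulL]
    have := key Finset.univ
    rwa [Finset.univ_sum_single y] at this
  have hrow : ∀ (i : Fin n) (v : Fin n → ℂ),
      β (Pi.single i 1) v = ∑ j, β (Pi.single i 1) (Pi.single j 1) * v j := by
    intro i v
    rw [hsymm, hsumL (Pi.single i 1) v]
    exact Finset.sum_congr rfl fun j _ => by rw [hsymm]; ring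
  set P : Matrix (Fin n) (Fin n) ℂ :=
    Matrix.of (fun i j => β (Pi.single i 1) (Pi.single j 1)) with hP
  have hPapp : ∀ i j, P i j = β (Pi.single i 1) (Pi.single j 1) := fun i j => rfl
  have hmul : ∀ (v : Fin n → ℂ) (i : Fin n), P.mulVec v i = β (Pi.single i 1) v := by
    intro v i
    rw [hrow i v]
    simp only [Matrix.mulVec, dotProduct]
    exact Finset.sum_congr rfl fun j _ => by rw [hPapp]
  have hPs : P.IsSymm := by
    ext i j
    rw [Matrix.transpose_apply, hPapp, hPapp, hsymm]
  have hdet : IsUnit P.det := by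
    rw [isUnit_iff_ne_zero]
    intro hdet0
    obtain ⟨v, hv0, hv⟩ := Matrix.exists_mulVec_eq_zero_iff.mpr hdet0
    refine hv0 (hnd v fun y => ?_)
    have hz : ∀ i, β (Pi.single i 1) v = 0 := by
      intro i
      rw [← hmul v i, hv]
      rfl
    rw [hsymm, hsumL v y]
    simp [hz]
  have hPA : P * A = Aᵀ * P := by
    ext i j
    rw [Matrix.mul_apply, Matrix.mul_apply]
    have hL : ∑ k, P i k * A k j = β (Pi.single i 1) (A.mulVec (Pi.single j 1)) := by
      rw [hrow i (A.mulVec (Pi.single j 1))]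
      refine Finset.sum_congr rfl fun k _ => ?_
      rw [Matrix.mulVec_single_one, hPapp, Matrix.col_apply]
    have hR : ∑ k, Aᵀ i k * P k j = β (A.mulVec (Pi.single i 1)) (Pi.single j 1) := by
      rw [hsumL (Pi.single j 1) (A.mulVec (Pi.single i 1))]
      refine Finset.sum_congr rfl fun k _ => ?_
      rw [Matrix.mulVec_single_one, hPapp, Matrix.transpose_apply, Matrix.col_apply]
    rw [hL, hR, hadj]
  refine ⟨P⁻¹, P * A, ?_, ?_, ?_, ?_⟩
  · show (P⁻¹)ᵀ = P⁻¹
    rw [Matrix.transpose_nonsing_inv, hPs]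
  · show (P * A)ᵀ = P * A
    rw [Matrix.transpose_mul, hPs, ← hPA]
  · rw [Matrix.isUnit_iff_isUnit_det]
    exact Matrix.isUnit_nonsing_inv_det P hdet
  · rw [← Matrix.mul_assoc, Matrix.nonsing_inv_mul P hdet, Matrix.one_mul]
end

section
/- For every square matrix A over the complex numbers, the set of symmetrizers of A, namely {S ∈ ℂ^{n×n} : S = Sᵀ and S·A = Aᵀ·S}, is a linear subspace of ℂ^{n×n} of dimension at least n. -/
noncomputable section SymmetrizerAux

open Matrix

abbrev MatN (n : ℕ) := Matrix (Fin n) (Fin n) ℂ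

/-- transpose as a linear map -/
def tauL (n : ℕ) : MatN n →ₗ[ℂ] MatN n :=
  (Matrix.transposeLinearEquiv (Fin n) (Fin n) ℂ ℂ).toLinearMap

def SymS (n : ℕ) : Submodule ℂ (MatN n) := LinearMap.ker (tauL n - LinearMap.id)
def AsymS (n : ℕ) : Submodule ℂ (MatN n) := LinearMap.ker (tauL n + LinearMap.id)

lemma mem_SymS {n : ℕ} {S : MatN n} : S ∈ SymS n ↔ S.transpose = S := by
  simp [SymS, LinearMap.mem_ker, tauL, sub_eq_zero, Matrix.transposeLinearEquiv]

lemma mem_AsymS {n : ℕ} {S : MatN n} : S ∈ AsymS n ↔ S.transpose = -S := by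
  simp [AsymS, LinearMap.mem_ker, tauL, add_eq_zero_iff_eq_neg, Matrix.transposeLinearEquiv]

/-- forward map: kill diagonal, antisymmetrize the pattern -/
def fwd0 (n : ℕ) : MatN n →ₗ[ℂ] MatN n where
  toFun S := Matrix.of fun i j => if i < j then S i j else if j < i then -S i j else 0
  map_add' S T := by
    ext i j
    simp only [Matrix.of_apply, Matrix.add_apply]
    split_ifs <;> ring
  map_smul' c S := by
    ext i j
    simp only [Matrix.of_apply, Matrix.smul_apply, RingHom.id_apply, smul_eq_mul]
    split_ifs <;> ring

def diag0 (n : ℕ) : MatN n →ₗ[ℂ] (Fin n → ℂ) where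
  toFun S := fun i => S i i
  map_add' _ _ := rfl
  map_smul' _ _ := rfl

def bwd0 (n : ℕ) : (MatN n × (Fin n → ℂ)) →ₗ[ℂ] MatN n where
  toFun P := Matrix.of fun i j => if i < j then P.1 i j else if j < i then P.1 j i else P.2 i
  map_add' P Q := by
    ext i j
    simp only [Matrix.of_apply, Matrix.add_apply, Prod.fst_add, Prod.snd_add, Pi.add_apply]
    split_ifs <;> ring
  map_smul' c P := by
    ext i j
    simp only [Matrix.of_apply, Matrix.smul_apply, Prod.smul_fst, Prod.smul_snd, Pi.smul_apply,
      RingHom.id_apply, smul_eq_mul]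
    split_ifs <;> ring

lemma fwd0_mem_asym {n : ℕ} (S : MatN n) (hS : S ∈ SymS n) : fwd0 n S ∈ AsymS n := by
  rw [mem_SymS] at hS
  rw [mem_AsymS]
  ext i j
  have hs : S j i = S i j := by
    exact congrFun (congrFun hS i) j
  simp only [Matrix.transpose_apply, Matrix.neg_apply, fwd0, LinearMap.coe_mk, AddHom.coe_mk,
    Matrix.of_apply]
  rcases lt_trichotomy i j with h | h | h
  · simp [h, asymm h, hs]
  · subst h; simp
  · simp [h, asymm h, hs]

lemma bwd0_mem_sym {n : ℕ} (P : MatN n × (Fin n → ℂ)) :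
    bwd0 n P ∈ SymS n := by
  rw [mem_SymS]
  ext i j
  simp only [Matrix.transpose_apply, bwd0, LinearMap.coe_mk, AddHom.coe_mk, Matrix.of_apply]
  rcases lt_trichotomy i j with h | h | h
  · simp [h, asymm h]
  · subst h; simp
  · simp [h, asymm h]

def fwdL (n : ℕ) : SymS n →ₗ[ℂ] (AsymS n × (Fin n → ℂ)) :=
  LinearMap.prod
    (((fwd0 n).comp (SymS n).subtype).codRestrict (AsymS n) fun S => fwd0_mem_asym S.1 S.2)
    ((diag0 n).comp (SymS n).subtype)

def bwdL (n : ℕ) : (AsymS n × (Fin n → ℂ)) →ₗ[ℂ] SymS n :=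
  ((bwd0 n).comp ((AsymS n).subtype.prodMap LinearMap.id)).codRestrict (SymS n)
    fun P => bwd0_mem_sym _

/-- the key equivalence: symmetric matrices ≃ antisymmetric × diagonal -/
def symEquiv (n : ℕ) : SymS n ≃ₗ[ℂ] (AsymS n × (Fin n → ℂ)) :=
  LinearEquiv.ofLinear (fwdL n) (bwdL n)
    (by
      apply LinearMap.ext
      intro P
      obtain ⟨T, d⟩ := P
      have hT : (T : MatN n).transpose = -(T : MatN n) := mem_AsymS.mp T.2
      have ha : ∀ i j, (T : MatN n) j i = -(T : MatN n) i j := by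
        intro i j
        exact congrFun (congrFun hT i) j
      have hd : ∀ i, (T : MatN n) i i = 0 := by
        intro i
        have h := ha i i
        linear_combination h / 2
      apply Prod.ext
      · apply Subtype.ext
        show (fwd0 n) ((bwd0 n) ((T : MatN n), d)) = (T : MatN n)
        ext i j
        simp only [fwd0, bwd0, LinearMap.coe_mk, AddHom.coe_mk, Matrix.of_apply]
        rcases lt_trichotomy i j with h | h | h
        · simp [h, asymm h]
        · subst h; simp [hd i]
        · simp [h, asymm h, ha i j]
      · show (diag0 n) ((bwd0 n) ((T : MatN n), d)) = d
        ext i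
        show (if i < i then (T : MatN n) i i else if i < i then (T : MatN n) i i else d i) = d i
        simp
    )
    (by
      apply LinearMap.ext
      intro S
      have hS : (S : MatN n).transpose = (S : MatN n) := mem_SymS.mp S.2
      have hs : ∀ i j, (S : MatN n) j i = (S : MatN n) i j := by
        intro i j
        exact congrFun (congrFun hS i) j
      apply Subtype.ext
      show (bwd0 n) ((fwd0 n) (S : MatN n), (diag0 n) (S : MatN n)) = (S : MatN n)
      ext i j
      simp only [fwd0, bwd0, diag0, LinearMap.coe_mk, AddHom.coe_mk, Matrix.of_apply]
      rcases lt_trichotomy i j with h | h | h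
      · simp [h, asymm h]
      · subst h; simp; rfl
      · simp [h, asymm h, hs]
    )

end SymmetrizerAux

theorem symmetrizers_subspace_dim_ge (n : ℕ) (A : Matrix (Fin n) (Fin n) ℂ) :
    ∃ W : Submodule ℂ (Matrix (Fin n) (Fin n) ℂ),
      (W : Set (Matrix (Fin n) (Fin n) ℂ)) =
        {S | S.IsSymm ∧ S * A = A.transpose * S} ∧
      n ≤ Module.finrank ℂ W := by
  classical
  set L0 : MatN n →ₗ[ℂ] MatN n :=
    LinearMap.mulRight ℂ A - LinearMap.mulLeft ℂ A.transpose with hL0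
  refine ⟨SymS n ⊓ LinearMap.ker L0, ?_, ?_⟩
  · ext S
    simp only [SetLike.mem_coe, Submodule.mem_inf, LinearMap.mem_ker, Set.mem_setOf_eq,
      mem_SymS, hL0, LinearMap.sub_apply, LinearMap.mulRight_apply, LinearMap.mulLeft_apply,
      sub_eq_zero, Matrix.IsSymm]
  · -- dimension bound
    have hmap : ∀ S : SymS n, L0 (S : MatN n) ∈ AsymS n := by
      intro S
      have hS : (S : MatN n).transpose = (S : MatN n) := mem_SymS.mp S.2
      rw [mem_AsymS]
      simp only [hL0, LinearMap.sub_apply, LinearMap.mulRight_apply, LinearMap.mulLeft_apply,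
        Matrix.transpose_sub, Matrix.transpose_mul, Matrix.transpose_transpose, hS]
      abel
    set L : SymS n →ₗ[ℂ] AsymS n :=
      (L0.comp (SymS n).subtype).codRestrict (AsymS n) hmap with hL
    have hdim : Module.finrank ℂ (SymS n) = Module.finrank ℂ (AsymS n) + n := by
      rw [(symEquiv n).finrank_eq, Module.finrank_prod, Module.finrank_pi]
      simp
    have hker : LinearMap.ker L =
        Submodule.comap (SymS n).subtype (SymS n ⊓ LinearMap.ker L0) := by
      ext S
      simp [hL, LinearMap.mem_ker, LinearMap.codRestrict, Submodule.mem_comap, S.2]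
    have hWfin : Module.finrank ℂ (LinearMap.ker L) =
        Module.finrank ℂ (SymS n ⊓ LinearMap.ker L0 : Submodule ℂ (MatN n)) := by
      rw [hker]
      exact (Submodule.comapSubtypeEquivOfLe inf_le_left).finrank_eq
    have hrn := LinearMap.finrank_range_add_finrank_ker L
    have hrle : Module.finrank ℂ (LinearMap.range L) ≤ Module.finrank ℂ (AsymS n) :=
      (LinearMap.range L).finrank_le
    rw [← hWfin]
    omega
end

section
/- Every symmetric matrix (real or complex) is similar to its transpose via a symmetric similarity; more generally, every square matrix A ∈ ℂ^{n×n} is similar to its transpose Aᵀ, and a similarity S with S·A·S⁻¹ = Aᵀ can be chosen symmetric: S = Sᵀ. -/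
open Module LinearMap Finset Matrix

/-- Auxiliary Hankel-type bilinear form. -/
noncomputable def hankelForm {V : Type} [AddCommGroup V] [Module ℂ V] (g : Module.End ℂ V)
    (f0 : V →ₗ[ℂ] ℂ) (j : ℕ) : V →ₗ[ℂ] V →ₗ[ℂ] ℂ :=
  LinearMap.mk₂ ℂ
    (fun x y => ∑ i ∈ Finset.range (j + 1), f0 ((g ^ i) x) * f0 ((g ^ (j - i)) y))
    (fun m₁ m₂ y => by simp [map_add, add_mul, Finset.sum_add_distrib])
    (fun c m y => by simp [_root_.map_smul, smul_eq_mul, Finset.mul_sum, mul_assoc])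
    (fun m y₁ y₂ => by simp [map_add, mul_add, Finset.sum_add_distrib])
    (fun c m y => by simp [_root_.map_smul, smul_eq_mul, Finset.mul_sum,
      mul_assoc, mul_left_comm])

theorem hankelForm_apply {V : Type} [AddCommGroup V] [Module ℂ V] (g : Module.End ℂ V)
    (f0 : V →ₗ[ℂ] ℂ) (j : ℕ) (x y : V) :
    hankelForm g f0 j x y
      = ∑ i ∈ Finset.range (j + 1), f0 ((g ^ i) x) * f0 ((g ^ (j - i)) y) := rfl

theorem nilp : ∀ (n : ℕ) (V : Type) [AddCommGroup V] [Module ℂ V] [FiniteDimensional ℂ V],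
    finrank ℂ V ≤ n → ∀ g : Module.End ℂ V, IsNilpotent g →
    ∃ B : V →ₗ[ℂ] V →ₗ[ℂ] ℂ, (∀ x y, B x y = B y x) ∧
      (∀ x, (∀ y, B x y = 0) → x = 0) ∧ (∀ x y, B (g x) y = B x (g y)) := by
  intro n
  induction n with
  | zero =>
    intro V _ _ _ hr g _
    rw [Nat.le_zero, Module.finrank_zero_iff (R := ℂ)] at hr
    exact ⟨0, by simp, fun x _ => Subsingleton.elim x 0, by simp⟩
  | succ n IH =>
    intro V _ _ _ hr g hgnil
    rcases subsingleton_or_nontrivial V with hV | hV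
    · exact ⟨0, by simp, fun x _ => Subsingleton.elim x 0, by simp⟩
    classical
    have hex : ∃ k, g ^ k = 0 := hgnil
    set k := Nat.find hex with hkdef
    have hk : g ^ k = 0 := Nat.find_spec hex
    have hkmin : ∀ m < k, g ^ m ≠ 0 := fun m hm => Nat.find_min hex hm
    have hk1 : 1 ≤ k := by
      rcases Nat.eq_zero_or_pos k with h0 | h
      · exfalso
        rw [h0, pow_zero] at hk
        obtain ⟨x, y, hxy⟩ := exists_pair_ne V
        exact hxy (by
          have h1 := congrArg (fun φ : Module.End ℂ V => φ x) hk
          have h2 := congrArg (fun φ : Module.End ℂ V => φ y) hk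
          simp only [Module.End.one_apply, LinearMap.zero_apply] at h1 h2
          rw [h1, h2])
      · exact h
    obtain ⟨j, hj⟩ : ∃ j, k = j + 1 := ⟨k - 1, by omega⟩
    have hgj : g ^ j ≠ 0 := hkmin j (by omega)
    have hgk : g ^ (j + 1) = 0 := by rw [← hj]; exact hk
    obtain ⟨v, hv⟩ : ∃ v, (g ^ j) v ≠ 0 := by
      by_contra h
      push_neg at h
      exact hgj (LinearMap.ext fun x => h x)
    have hzero : ∀ m, j + 1 ≤ m → g ^ m = 0 := by
      intro m hm
      obtain ⟨d, rfl⟩ : ∃ d, m = (j + 1) + d := ⟨m - (j + 1), by omega⟩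
      rw [pow_add, hgk, zero_mul]
    set w : Fin (j + 1) → V := fun i => (g ^ (i : ℕ)) v with hw
    -- linear independence of the chain
    have hli : LinearIndependent ℂ w := by
      rw [Fintype.linearIndependent_iff]
      intro a ha
      by_contra hcon
      push_neg at hcon
      obtain ⟨i0, hi0⟩ := hcon
      set a' : ℕ → ℂ := fun t => if h : t < j + 1 then a ⟨t, h⟩ else 0 with ha'
      have hexP : ∃ t, a' t ≠ 0 := ⟨i0, by simp [ha', i0.2, hi0, Fin.is_le]⟩
      set t0 := Nat.find hexP with ht0def
      have ht0 : a' t0 ≠ 0 := Nat.find_spec hexP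
      have hmin : ∀ s < t0, a' s = 0 := by
        intro s hs
        by_contra h
        exact Nat.find_min hexP hs h
      have ht0lt : t0 < j + 1 := by
        by_contra h
        exact ht0 (by simp [ha', h, show ¬ t0 ≤ j by omega])
      have happ := congrArg (g ^ (j - t0)) ha
      rw [map_sum, map_zero] at happ
      have hterm : ∀ i : Fin (j + 1),
          (g ^ (j - t0)) (a i • w i) =
            if i = (⟨t0, ht0lt⟩ : Fin (j + 1)) then a i • (g ^ j) v else 0 := by
        intro i
        rw [_root_.map_smul, hw]
        have hcomp : (g ^ (j - t0)) ((g ^ (i : ℕ)) v) = (g ^ (j - t0 + (i : ℕ))) v := by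
          rw [pow_add, Module.End.mul_apply]
        rw [hcomp]
        by_cases h1 : i = (⟨t0, ht0lt⟩ : Fin (j + 1))
        · have h1' : (i : ℕ) = t0 := by rw [h1]
          rw [if_pos h1, h1', Nat.sub_add_cancel (by omega : t0 ≤ j)]
        · rw [if_neg h1]
          have h1' : (i : ℕ) ≠ t0 := fun hh => h1 (Fin.ext hh)
          rcases lt_or_gt_of_ne h1' with h2 | h2
          · have : a i = 0 := by
              have := hmin (i : ℕ) h2
              simpa [ha', i.2, Fin.is_le] using this
            rw [this, zero_smul]
          · rw [hzero (j - t0 + (i : ℕ)) (by omega)]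
            simp
      rw [Finset.sum_congr rfl fun i _ => hterm i] at happ
      rw [Finset.sum_ite_eq' Finset.univ (⟨t0, ht0lt⟩ : Fin (j + 1))
        (fun i => a i • (g ^ j) v)] at happ
      simp only [Finset.mem_univ, if_true] at happ
      rcases smul_eq_zero.mp happ with h0 | h0
      · exact ht0 (by simpa [ha', ht0lt, show t0 ≤ j by omega] using h0)
      · exact hv h0
    -- dual functional
    set Z := Submodule.span ℂ (Set.range w) with hZ
    set b : Basis (Fin (j + 1)) ℂ Z := Basis.span hli with hb
    obtain ⟨C, hC⟩ := Submodule.exists_isCompl Z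
    set pZ : V →ₗ[ℂ] Z := Z.projectionOnto C hC with hpZ
    set f0 : V →ₗ[ℂ] ℂ := (b.coord ⟨j, by omega⟩) ∘ₗ pZ with hf0def
    have hf0 : ∀ m : ℕ, f0 ((g ^ m) v) = if m = j then 1 else 0 := by
      intro m
      by_cases hm : m ≤ j
      · have hmem : (g ^ m) v = ((b ⟨m, by omega⟩ : Z) : V) := by
          rw [hb, Basis.span_apply]
        rw [hf0def, LinearMap.comp_apply, hmem, hpZ,
          Submodule.projectionOnto_apply_left hC]
        rw [Basis.coord_apply, Basis.repr_self, Finsupp.single_apply]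
        by_cases hmj : m = j
        · rw [if_pos hmj, if_pos (by simp [hmj])]
        · rw [if_neg hmj, if_neg (by simp [Fin.ext_iff]; omega)]
      · rw [hzero m (by omega)]
        simp only [LinearMap.zero_apply, map_zero]
        rw [if_neg (by omega)]
    -- the projection pi
    set π : Module.End ℂ V := ∑ i ∈ Finset.range (j + 1),
      (LinearMap.toSpanSingleton ℂ V ((g ^ i) v)) ∘ₗ (f0 ∘ₗ (g ^ (j - i))) with hπdef
    have hπ : ∀ x, π x = ∑ i ∈ Finset.range (j + 1),
        f0 ((g ^ (j - i)) x) • (g ^ i) v := by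
      intro x
      rw [hπdef]
      simp [LinearMap.sum_apply, LinearMap.toSpanSingleton_apply]
    -- π commutes with g
    have hcomm : ∀ x, π (g x) = g (π x) := by
      intro x
      rw [hπ, hπ, map_sum]
      have hR : ∀ i, g (f0 ((g ^ (j - i)) x) • (g ^ i) v)
          = f0 ((g ^ (j - i)) x) • (g ^ (i + 1)) v := by
        intro i
        rw [_root_.map_smul]
        congr 1
        rw [pow_succ', Module.End.mul_apply]
      rw [Finset.sum_congr rfl fun i _ => hR i]
      rw [Finset.sum_range_succ' (fun i => f0 ((g ^ (j - i)) (g x)) • (g ^ i) v) j]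
      rw [Finset.sum_range_succ (fun i => f0 ((g ^ (j - i)) x) • (g ^ (i + 1)) v) j]
      have hz1 : f0 ((g ^ (j - 0)) (g x)) • (g ^ 0) v = 0 := by
        have : (g ^ (j - 0)) (g x) = (g ^ (j + 1)) x := by
          rw [Nat.sub_zero, pow_succ, Module.End.mul_apply]
        rw [this, hgk]
        simp
      have hz2 : f0 ((g ^ (j - j)) x) • (g ^ (j + 1)) v = 0 := by
        rw [hgk]
        simp
      rw [hz1, hz2, add_zero, add_zero]
      refine Finset.sum_congr rfl fun i hi => ?_
      rw [Finset.mem_range] at hi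
      congr 2
      have h1 : (g ^ (j - (i + 1))) (g x) = (g ^ (j - (i + 1) + 1)) x := by
        rw [pow_succ, Module.End.mul_apply]
      rw [h1]
      congr 2
      omega
    -- π fixes the chain
    have hfix : ∀ m : ℕ, m ≤ j → π ((g ^ m) v) = (g ^ m) v := by
      intro m hm
      rw [hπ]
      have hterm : ∀ i ∈ Finset.range (j + 1),
          f0 ((g ^ (j - i)) ((g ^ m) v)) • (g ^ i) v
            = if i = m then (g ^ m) v else 0 := by
        intro i hi
        rw [Finset.mem_range] at hi
        have h1 : (g ^ (j - i)) ((g ^ m) v) = (g ^ (j - i + m)) v := by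
          rw [pow_add, Module.End.mul_apply]
        rw [h1, hf0]
        by_cases him : i = m
        · rw [if_pos (by omega : j - i + m = j), if_pos him, him, one_smul]
        · rw [if_neg (by omega : ¬ j - i + m = j), if_neg him, zero_smul]
      rw [Finset.sum_congr rfl hterm, Finset.sum_ite_eq' (Finset.range (j + 1)) m
        (fun _ => (g ^ m) v), if_pos (Finset.mem_range.mpr (by omega))]
    -- π is idempotent
    have hproj : ∀ x, π (π x) = π x := by
      intro x
      conv_lhs => rw [hπ x]
      rw [map_sum]
      rw [Finset.sum_congr rfl fun i hi => ?_]
      · exact (hπ x).symm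
      · rw [Finset.mem_range] at hi
        rw [_root_.map_smul, hfix i (by omega)]
    -- the invariant complement W = ker π
    set W : Submodule ℂ V := LinearMap.ker π with hWdef
    have hginv : ∀ x ∈ W, g x ∈ W := by
      intro x hx
      rw [hWdef, LinearMap.mem_ker] at hx ⊢
      rw [hcomm, hx, map_zero]
    set gW : Module.End ℂ W := g.restrict hginv with hgW
    have hgWnil : IsNilpotent gW := by
      refine ⟨j + 1, ?_⟩
      rw [hgW, Module.End.pow_restrict]
      ext x
      simp only [LinearMap.restrict_apply, LinearMap.zero_apply]
      rw [hgk]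
      simp
    have hvne : v ≠ 0 := fun h0 => hv (by rw [h0, map_zero])
    have hπv : π v = v := by
      have := hfix 0 (by omega)
      simpa using this
    have hWne : W ≠ ⊤ := by
      intro h
      have : π v = 0 := by
        have : v ∈ W := h ▸ Submodule.mem_top
        rwa [hWdef, LinearMap.mem_ker] at this
      exact hvne (by rw [← hπv, this])
    have hfinW : finrank ℂ W ≤ n := by
      have := Submodule.finrank_lt (K := ℂ) hWne
      omega
    obtain ⟨BW, hWs, hWn, hWa⟩ := IH W hfinW gW hgWnil
    -- the map onto W
    set q : V →ₗ[ℂ] W := LinearMap.codRestrict W (1 - π)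
      (fun x => by
        rw [hWdef, LinearMap.mem_ker]
        simp only [LinearMap.sub_apply, Module.End.one_apply, map_sub]
        rw [hproj, sub_self]) with hqdef
    have hq : ∀ x, (q x : V) = x - π x := fun x => rfl
    have hqg : ∀ x, q (g x) = gW (q x) := by
      intro x
      apply Subtype.ext
      rw [hq, hgW, LinearMap.restrict_coe_apply, hq, map_sub, hcomm]
    have hqW : ∀ x (hx : x ∈ W), q x = ⟨x, hx⟩ := by
      intro x hx
      apply Subtype.ext
      rw [hq]
      have : π x = 0 := by rwa [hWdef, LinearMap.mem_ker] at hx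
      rw [this, sub_zero]
    -- coefficients of elements of W vanish
    have hcoefW : ∀ x ∈ W, ∀ m : ℕ, m ≤ j → f0 ((g ^ m) x) = 0 := by
      intro x hx m hm
      have hπx : π x = 0 := by rwa [hWdef, LinearMap.mem_ker] at hx
      rw [hπ] at hπx
      have hfin : ∑ i : Fin (j + 1), f0 ((g ^ (j - (i : ℕ))) x) • w i = 0 := by
        rw [← hπx, Finset.sum_range fun i => f0 ((g ^ (j - i)) x) • (g ^ i) v]
      have hall := Fintype.linearIndependent_iff.mp hli
        (fun i : Fin (j + 1) => f0 ((g ^ (j - (i : ℕ))) x)) hfin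
      have := hall ⟨j - m, by omega⟩
      simpa [show j - (j - m) = m by omega] using this
    -- the Hankel-type form
    set B0 : V →ₗ[ℂ] V →ₗ[ℂ] ℂ := hankelForm g f0 j with hB0def
    have hB0 : ∀ x y, B0 x y = ∑ i ∈ Finset.range (j + 1),
        f0 ((g ^ i) x) * f0 ((g ^ (j - i)) y) := fun x y => hankelForm_apply g f0 j x y
    have hB0symm : ∀ x y, B0 x y = B0 y x := by
      intro x y
      rw [hB0, hB0]
      rw [← Finset.sum_range_reflect (fun i => f0 ((g ^ i) y) * f0 ((g ^ (j - i)) x)) (j + 1)]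
      refine Finset.sum_congr rfl fun i hi => ?_
      rw [Finset.mem_range] at hi
      rw [show j + 1 - 1 - i = j - i from by omega, show j - (j - i) = i from by omega,
        mul_comm]
    have hB0adj : ∀ x y, B0 (g x) y = B0 x (g y) := by
      intro x y
      rw [hB0, hB0]
      rw [Finset.sum_range_succ (fun i => f0 ((g ^ i) (g x)) * f0 ((g ^ (j - i)) y)) j]
      rw [Finset.sum_range_succ' (fun i => f0 ((g ^ i) x) * f0 ((g ^ (j - i)) (g y))) j]
      have hz1 : f0 ((g ^ j) (g x)) * f0 ((g ^ (j - j)) y) = 0 := by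
        have h1 : (g ^ j) (g x) = (g ^ (j + 1)) x := by rw [pow_succ, Module.End.mul_apply]
        rw [h1, hgk]
        simp
      have hz2 : f0 ((g ^ 0) x) * f0 ((g ^ (j - 0)) (g y)) = 0 := by
        have h1 : (g ^ (j - 0)) (g y) = (g ^ (j + 1)) y := by
          rw [Nat.sub_zero, ← Module.End.mul_apply, ← pow_succ]
        rw [h1, hgk]
        simp
      rw [hz1, hz2, add_zero, add_zero]
      refine Finset.sum_congr rfl fun i hi => ?_
      rw [Finset.mem_range] at hi
      have h1 : (g ^ i) (g x) = (g ^ (i + 1)) x := by rw [pow_succ, Module.End.mul_apply]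
      have h2 : (g ^ (j - (i + 1))) (g y) = (g ^ (j - i)) y := by
        rw [← Module.End.mul_apply, ← pow_succ, show j - (i + 1) + 1 = j - i from by omega]
      rw [h1, h2]
    -- assembling the form
    refine ⟨B0 + BW.compl₁₂ q q, ?_, ?_, ?_⟩
    · intro x y
      simp only [LinearMap.add_apply, LinearMap.compl₁₂_apply]
      rw [hB0symm, hWs]
    · intro x hx
      have hq0 : q x = 0 := by
        apply hWn
        intro u
        have h1 := hx (u : V)
        simp only [LinearMap.add_apply, LinearMap.compl₁₂_apply] at h1
        have hB0u : B0 x (u : V) = 0 := by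
          rw [hB0]
          refine Finset.sum_eq_zero fun i hi => ?_
          rw [Finset.mem_range] at hi
          rw [hcoefW (u : V) u.2 (j - i) (by omega), mul_zero]
        rw [hB0u, zero_add, hqW (u : V) u.2] at h1
        simpa using h1
      have hxπ : x = π x := by
        have h2 : x - π x = 0 := by rw [← hq x, hq0, Submodule.coe_zero]
        exact sub_eq_zero.mp h2
      have hf0x : ∀ m, m ≤ j → f0 ((g ^ m) x) = 0 := by
        intro m hm
        have h1 := hx ((g ^ m) v)
        simp only [LinearMap.add_apply, LinearMap.compl₁₂_apply] at h1
        rw [hq0] at h1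
        simp only [map_zero, LinearMap.zero_apply, add_zero] at h1
        rw [hB0] at h1
        have hterm : ∀ i ∈ Finset.range (j + 1),
            f0 ((g ^ i) x) * f0 ((g ^ (j - i)) ((g ^ m) v))
              = if i = m then f0 ((g ^ i) x) else 0 := by
          intro i hi
          rw [Finset.mem_range] at hi
          rw [show (g ^ (j - i)) ((g ^ m) v) = (g ^ (j - i + m)) v from by
            rw [pow_add, Module.End.mul_apply], hf0]
          by_cases him : i = m
          · rw [if_pos (by omega : j - i + m = j), if_pos him, mul_one]
          · rw [if_neg (by omega : ¬ j - i + m = j), if_neg him, mul_zero]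
        rw [Finset.sum_congr rfl hterm, Finset.sum_ite_eq' (Finset.range (j + 1)) m
          (fun i => f0 ((g ^ i) x)), if_pos (Finset.mem_range.mpr (by omega))] at h1
        exact h1
      rw [hxπ, hπ]
      exact Finset.sum_eq_zero fun i hi => by
        rw [Finset.mem_range] at hi
        rw [hf0x (j - i) (by omega), zero_smul]
    · intro x y
      simp only [LinearMap.add_apply, LinearMap.compl₁₂_apply]
      rw [hB0adj, hqg, hqg, hWa]

variable {V : Type} [AddCommGroup V] [Module ℂ V]

theorem glue {f : Module.End ℂ V} {U W : Submodule ℂ V}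
    (hc : IsCompl U W) (hU : ∀ x ∈ U, f x ∈ U) (hW : ∀ x ∈ W, f x ∈ W)
    (BU : U →ₗ[ℂ] U →ₗ[ℂ] ℂ) (BW : W →ₗ[ℂ] W →ₗ[ℂ] ℂ)
    (hUs : ∀ x y, BU x y = BU y x) (hUn : ∀ x, (∀ y, BU x y = 0) → x = 0)
    (hUa : ∀ x y, BU (f.restrict hU x) y = BU x (f.restrict hU y))
    (hWs : ∀ x y, BW x y = BW y x) (hWn : ∀ x, (∀ y, BW x y = 0) → x = 0)
    (hWa : ∀ x y, BW (f.restrict hW x) y = BW x (f.restrict hW y)) :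
    ∃ B : V →ₗ[ℂ] V →ₗ[ℂ] ℂ, (∀ x y, B x y = B y x) ∧
      (∀ x, (∀ y, B x y = 0) → x = 0) ∧ (∀ x y, B (f x) y = B x (f y)) := by
  set pU : V →ₗ[ℂ] U := U.projectionOnto W hc with hpU
  set pW : V →ₗ[ℂ] W := W.projectionOnto U hc.symm with hpW
  have hdec : ∀ x : V, (pU x : V) + (pW x : V) = x := fun x =>
    Submodule.projection_add_projection_eq_self hc x
  have hfU : ∀ x : V, pU (f x) = f.restrict hU (pU x) := by
    intro x
    have hx : f x = f (pU x : V) + f (pW x : V) := by rw [← map_add, hdec]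
    rw [hx, map_add]
    have h1 : pU (f (pU x : V)) = ⟨f (pU x : V), hU _ (pU x).2⟩ :=
      Submodule.projectionOnto_apply_left hc (⟨f (pU x : V), hU _ (pU x).2⟩ : U)
    have h2 : pU (f (pW x : V)) = 0 :=
      Submodule.projectionOnto_apply_of_mem_right hc (hW _ (pW x).2)
    rw [h1, h2, add_zero]
    rfl
  have hfW : ∀ x : V, pW (f x) = f.restrict hW (pW x) := by
    intro x
    have hx : f x = f (pU x : V) + f (pW x : V) := by rw [← map_add, hdec]
    rw [hx, map_add]
    have h1 : pW (f (pW x : V)) = ⟨f (pW x : V), hW _ (pW x).2⟩ :=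
      Submodule.projectionOnto_apply_left hc.symm (⟨f (pW x : V), hW _ (pW x).2⟩ : W)
    have h2 : pW (f (pU x : V)) = 0 :=
      Submodule.projectionOnto_apply_of_mem_right hc.symm (hU _ (pU x).2)
    rw [h1, h2, zero_add]
    rfl
  refine ⟨BU.compl₁₂ pU pU + BW.compl₁₂ pW pW, ?_, ?_, ?_⟩
  · intro x y
    simp only [LinearMap.add_apply, LinearMap.compl₁₂_apply]
    rw [hUs, hWs]
  · intro x hx
    have hU0 : pU x = 0 := by
      refine hUn _ fun u => ?_
      have := hx (u : V)
      simp only [LinearMap.add_apply, LinearMap.compl₁₂_apply] at this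
      rwa [Submodule.projectionOnto_apply_left hc u,
        Submodule.projectionOnto_apply_of_mem_right hc.symm u.2, map_zero,
        add_zero] at this
    have hW0 : pW x = 0 := by
      refine hWn _ fun w => ?_
      have := hx (w : V)
      simp only [LinearMap.add_apply, LinearMap.compl₁₂_apply] at this
      rwa [Submodule.projectionOnto_apply_left hc.symm w,
        Submodule.projectionOnto_apply_of_mem_right hc w.2, map_zero,
        zero_add] at this
    rw [← hdec x, hU0, hW0]
    simp
  · intro x y
    simp only [LinearMap.add_apply, LinearMap.compl₁₂_apply]
    rw [hfU, hfW, hfU y, hfW y, hUa, hWa]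

theorem gen : ∀ (n : ℕ) (V : Type) [AddCommGroup V] [Module ℂ V] [FiniteDimensional ℂ V],
    finrank ℂ V ≤ n → ∀ f : Module.End ℂ V,
    ∃ B : V →ₗ[ℂ] V →ₗ[ℂ] ℂ, (∀ x y, B x y = B y x) ∧
      (∀ x, (∀ y, B x y = 0) → x = 0) ∧ (∀ x y, B (f x) y = B x (f y)) := by
  intro n
  induction n with
  | zero =>
    intro V _ _ _ hr f
    rw [Nat.le_zero, Module.finrank_zero_iff (R := ℂ)] at hr
    exact ⟨0, by simp, fun x _ => Subsingleton.elim x 0, by simp⟩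
  | succ n IH =>
    intro V _ _ _ hr f
    rcases subsingleton_or_nontrivial V with hV | hV
    · exact ⟨0, by simp, fun x _ => Subsingleton.elim x 0, by simp⟩
    obtain ⟨μ, hμ⟩ := Module.End.exists_eigenvalue f
    set g : Module.End ℂ V := f - μ • 1 with hg
    have key : ∀ B : V →ₗ[ℂ] V →ₗ[ℂ] ℂ, (∀ x y, B (g x) y = B x (g y)) →
        ∀ x y, B (f x) y = B x (f y) := by
      intro B hBg x y
      have h1 : B (g x) y = B (f x) y - μ * B x y := by
        simp [hg, map_sub, LinearMap.sub_apply, _root_.map_smul, smul_eq_mul]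
      have h2 : B x (g y) = B x (f y) - μ * B x y := by
        simp [hg, map_sub, LinearMap.sub_apply, _root_.map_smul, smul_eq_mul]
      have := hBg x y
      rw [h1, h2] at this
      exact sub_left_inj.mp this
    by_cases hnil : IsNilpotent g
    · obtain ⟨B, h1, h2, h3⟩ := nilp (n + 1) V hr g hnil
      exact ⟨B, h1, h2, key B h3⟩
    · set m := finrank ℂ V with hm
      set K := LinearMap.ker (g ^ m) with hK
      set R := LinearMap.range (g ^ m) with hR
      have hm1 : 0 < m := Module.finrank_pos
      have hdisj : Disjoint K R := by
        rw [Submodule.disjoint_def]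
        intro x hxK hxR
        obtain ⟨y, hy⟩ := hxR
        have hy2 : y ∈ LinearMap.ker (g ^ (m + m)) := by
          rw [LinearMap.mem_ker, pow_add, Module.End.mul_apply, hy]
          exact hxK
        rw [Module.End.ker_pow_eq_ker_pow_finrank_of_le (by omega)] at hy2
        rw [← hy]
        exact hy2
      have hsum : K ⊔ R = ⊤ := by
        apply Submodule.eq_top_of_finrank_eq
        have h2 := Submodule.finrank_sup_add_finrank_inf_eq K R
        rw [disjoint_iff.mp hdisj, finrank_bot, add_zero] at h2
        have h3 := LinearMap.finrank_range_add_finrank_ker (g ^ m)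
        rw [h2, ← hK, ← hR] at *
        omega
      have hcompl : IsCompl K R := ⟨hdisj, codisjoint_iff.mpr hsum⟩
      have cf : Commute f (g ^ m) :=
        (((Commute.refl f).sub_right ((Commute.one_right f).smul_right μ)).pow_right m)
      have hKinv : ∀ x ∈ K, f x ∈ K := by
        intro x hx
        rw [hK, LinearMap.mem_ker] at hx ⊢
        rw [← Module.End.mul_apply, ← cf.eq, Module.End.mul_apply, hx, map_zero]
      have hRinv : ∀ x ∈ R, f x ∈ R := by
        rintro x ⟨y, rfl⟩
        exact ⟨f y, by rw [← Module.End.mul_apply, ← cf.eq, Module.End.mul_apply]⟩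
      have hKne : K ≠ ⊥ := by
        obtain ⟨v, hv, hv0⟩ := hμ.exists_hasEigenvector
        intro hbot
        apply hv0
        have hgv : g v = 0 := by
          rw [hg]
          simp only [LinearMap.sub_apply, LinearMap.smul_apply, Module.End.one_apply]
          rw [Module.End.mem_eigenspace_iff.mp hv]
          simp
        have hvK : v ∈ K := by
          rw [hK, LinearMap.mem_ker]
          obtain ⟨m', hm'⟩ : ∃ m', m = m' + 1 := ⟨m - 1, by omega⟩
          rw [hm', pow_succ, Module.End.mul_apply, hgv, map_zero]
        rw [hbot] at hvK
        exact hvK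
      have hKneTop : K ≠ ⊤ := by
        intro h
        exact hnil ⟨m, LinearMap.ker_eq_top.mp h⟩
      have hfinK : finrank ℂ K ≤ n := by
        have := Submodule.finrank_lt (K := ℂ) hKneTop
        omega
      have hfinR : finrank ℂ R ≤ n := by
        have h3 := LinearMap.finrank_range_add_finrank_ker (g ^ m)
        have h4 : finrank ℂ K ≠ 0 :=
          fun h0 => hKne (Submodule.finrank_eq_zero.mp h0)
        rw [← hK, ← hR] at h3
        omega
      obtain ⟨BK, hKs, hKn, hKa⟩ := IH K hfinK (f.restrict hKinv)
      obtain ⟨BR, hRs, hRn, hRa⟩ := IH R hfinR (f.restrict hRinv)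
      exact glue hcompl hKinv hRinv BK BR hKs hKn hKa hRs hRn hRa

theorem similar_to_transpose_via_symmetric (n : ℕ) (A : Matrix (Fin n) (Fin n) ℂ) :
    ∃ S : Matrix (Fin n) (Fin n) ℂ,
      IsUnit S ∧ S.IsSymm ∧ S * A * S⁻¹ = A.transpose := by
  obtain ⟨B, hsymm, hnd, hadj⟩ := gen n (Fin n → ℂ) (by simp) (Matrix.toLin' A)
  set e : Fin n → (Fin n → ℂ) := fun i => Pi.single i 1 with he
  set S : Matrix (Fin n) (Fin n) ℂ := Matrix.of fun i j => B (e i) (e j) with hS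
  have hx : ∀ x : Fin n → ℂ, x = ∑ i, x i • e i := by
    intro x; funext j
    simp [he, Pi.single_apply, Finset.sum_apply, mul_ite]
  have hexp : ∀ x y : Fin n → ℂ, B x y = ∑ i, ∑ j, x i * (S i j * y j) := by
    intro x y
    conv_lhs => rw [hx x, hx y]
    simp only [map_sum, _root_.map_smul, LinearMap.sum_apply, LinearMap.smul_apply,
      smul_eq_mul]
    rw [Finset.sum_comm]
    refine Finset.sum_congr rfl fun i _ => ?_
    rw [Finset.mul_sum]
    refine Finset.sum_congr rfl fun j _ => ?_
    simp [hS]; ring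
  have hcol : ∀ i, Matrix.toLin' A (e i) = ∑ k, A k i • e k := by
    intro i; funext l
    simp [Matrix.toLin'_apply, he, Matrix.mulVec_single, Finset.sum_apply,
      Pi.single_apply, mul_ite]
  have hSA : A.transpose * S = S * A := by
    ext i j
    have := hadj (e i) (e j)
    rw [hcol i, hcol j, map_sum, map_sum] at this
    simp only [LinearMap.sum_apply, _root_.map_smul, LinearMap.smul_apply, smul_eq_mul] at this
    simpa [Matrix.mul_apply, Matrix.transpose_apply, hS, mul_comm] using this
  have hdet : S.det ≠ 0 := by
    intro h0
    obtain ⟨v, hv0, hv⟩ := (Matrix.exists_mulVec_eq_zero_iff.2 h0)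
    refine hv0 (hnd v fun y => ?_)
    rw [hsymm, hexp]
    have hz : ∀ i, ∑ j, S i j * v j = 0 := by
      intro i
      have := congrFun hv i
      simpa [Matrix.mulVec, dotProduct] using this
    calc ∑ i, ∑ j, y i * (S i j * v j) = ∑ i, y i * ∑ j, S i j * v j := by
          refine Finset.sum_congr rfl fun i _ => ?_; rw [Finset.mul_sum]
      _ = 0 := by simp [hz]
  have hunit : IsUnit S := (Matrix.isUnit_iff_isUnit_det S).2 (isUnit_iff_ne_zero.2 hdet)
  refine ⟨S, hunit, ?_, ?_⟩
  · ext i j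
    exact hsymm (e j) (e i)
  · rw [Matrix.mul_assoc, ← Matrix.mul_assoc, ← hSA, Matrix.mul_assoc,
      Matrix.mul_nonsing_inv S (isUnit_iff_ne_zero.2 hdet), Matrix.mul_one]
end

section
/- If X(t) solves the ZNN flow Ẋ·X + X·Ẋ = Ȧ + η(A - X·X) on [t₀, ∞) with η > 0, and E(t) = A(t) - X(t)², then ‖E(t)‖ ≤ e^{-η(t-t₀)}‖E(t₀)‖ for all t ≥ t₀; in particular if X(t₀)² = A(t₀) then X(t)² = A(t) for all t ≥ t₀. -/
attribute [local instance] Matrix.normedAddCommGroup Matrix.normedSpace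

theorem znn_flow_exponential_tracking (n : ℕ) (η : ℝ) (hη : 0 < η) (t₀ : ℝ)
    (A X A' X' : ℝ → Matrix (Fin n) (Fin n) ℂ)
    (hA : ∀ t, HasDerivAt A (A' t) t)
    (hX : ∀ t, HasDerivAt X (X' t) t)
    (hflow : ∀ t, t₀ ≤ t →
      X' t * X t + X t * X' t = A' t + η • (A t - X t * X t)) :
    (∀ t, t₀ ≤ t → ‖A t - X t * X t‖ ≤
        Real.exp (-η * (t - t₀)) * ‖A t₀ - X t₀ * X t₀‖) ∧
      (X t₀ * X t₀ = A t₀ → ∀ t, t₀ ≤ t → X t * X t = A t) := by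
  have hmul : ∀ t : ℝ, HasDerivAt (fun t => X t * X t)
      (X' t * X t + X t * X' t) t := by
    intro t
    letI : NormedRing (Matrix (Fin n) (Fin n) ℂ) := Matrix.linftyOpNormedRing
    letI : NormedAlgebra ℝ (Matrix (Fin n) (Fin n) ℂ) := Matrix.linftyOpNormedAlgebra
    have h1 : HasDerivAt X (X' t) t := hX t
    have := h1.mul h1
    exact this
  set E : ℝ → Matrix (Fin n) (Fin n) ℂ := fun t => A t - X t * X t with hE
  have hEderiv : ∀ t, HasDerivAt E (A' t - (X' t * X t + X t * X' t)) t :=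
    fun t => (hA t).sub (hmul t)
  set F : ℝ → Matrix (Fin n) (Fin n) ℂ := fun t => Real.exp (η * (t - t₀)) • E t with hF
  have hexp : ∀ s : ℝ, HasDerivAt (fun u => Real.exp (η * (u - t₀)))
      (Real.exp (η * (s - t₀)) * η) s := by
    intro s
    have : HasDerivAt (fun u => η * (u - t₀)) η s := by
      simpa using (((hasDerivAt_id s).sub_const t₀).const_mul η)
    simpa [mul_comm] using this.exp
  have hFderiv : ∀ t, t₀ ≤ t → HasDerivAt F 0 t := by
    intro t ht
    have hE' : HasDerivAt E (-η • E t) t := by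
      have := hEderiv t
      have heq : A' t - (X' t * X t + X t * X' t) = -η • E t := by
        rw [hflow t ht]; simp [hE]
      rwa [heq] at this
    have := (hexp t).smul hE'
    refine this.congr_deriv ?_
    simp [smul_smul]
  have hconst : ∀ t, t₀ ≤ t → F t = F t₀ := by
    intro t ht
    have hFall : ∀ s, HasDerivAt F
        (Real.exp (η * (s - t₀)) • (A' s - (X' s * X s + X s * X' s)) +
          (Real.exp (η * (s - t₀)) * η) • E s) s :=
      fun s => (hexp s).smul (hEderiv s)
    have hcont : ContinuousOn F (Set.Icc t₀ t) :=
      (continuous_iff_continuousAt.2 fun s => (hFall s).continuousAt).continuousOn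
    exact constant_of_has_deriv_right_zero hcont
      (fun s hs => (hFderiv s hs.1).hasDerivWithinAt) t ⟨ht, le_rfl⟩
  have hEeq : ∀ t, t₀ ≤ t → E t = Real.exp (-η * (t - t₀)) • E t₀ := by
    intro t ht
    have h1 := hconst t ht
    have h2 : F t₀ = E t₀ := by simp [hF]
    rw [h2] at h1
    have h3 : Real.exp (-η * (t - t₀)) • F t = E t := by
      simp [hF, smul_smul, ← Real.exp_add]
    rw [← h3, h1]
  constructor
  · intro t ht
    rw [show A t - X t * X t = E t from rfl, hEeq t ht, norm_smul]
    simp [abs_of_pos (Real.exp_pos _)]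
    exact le_rfl
  · intro h0 t ht
    have hEt : E t = 0 := by
      rw [hEeq t ht]
      simp [hE, h0]
    have : A t - X t * X t = 0 := hEt
    exact (sub_eq_zero.mp this).symm
end
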